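/- (Formal Kostov theorem) Let k ≥ 1 and let X̂ ∈ ℂ[[x,λ_1,…,λ_m]] be a formal power series whose restriction to λ = 0 equals x^{k+1}·u(x) for some u ∈ ℂ[[x]] with u(0) ≠ 0. Then there exist a formal power series φ̂ ∈ ℂ[[x,λ]] with zero constant term and with the coefficient of x in φ̂(x,0) nonzero, and formal series ŷ_0,…,ŷ_{k−1}, μ̂ ∈ ℂ[[λ]] with ŷ_j(0) = 0 for all j, such that, at the level of formal power series (substituting φ̂ for x, which is legitimate since φ̂ has zero constant term), ( φ̂^{k+1} + ŷ_{k−1}φ̂^{k−1} + ⋯ + ŷ_0 )·(1 + μ̂·φ̂^k)^{−1} = (∂φ̂/∂x)·X̂ in ℂ[[x,λ]]. -/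

import Mathlib

open Filter Topology

/-- The formal partial derivative `∂/∂x` of a formal power series in the variables
`x = X 0, λ₁ = X 1, …, λ_m = X m`. -/
noncomputable def formalDx {m : ℕ} (f : MvPowerSeries (Fin (m + 1)) ℂ) :
    MvPowerSeries (Fin (m + 1)) ℂ :=
  fun d => ((d 0 : ℕ) + 1 : ℂ) * MvPowerSeries.coeff (d + Finsupp.single 0 1) f

/-- A formal power series in `(x, λ)` depends only on the parameters `λ` (no `x`). -/
def noXVar {m : ℕ} (f : MvPowerSeries (Fin (m + 1)) ℂ) : Prop :=
  ∀ d : Fin (m + 1) →₀ ℕ, d 0 ≠ 0 → MvPowerSeries.coeff d f = 0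

open Finsupp MvPowerSeries

namespace KostovAux

variable {m : ℕ}

local notation "σ" => Fin (m+1)

abbrev D (m : ℕ) := Fin (m + 1) →₀ ℕ

/-- the weight in the λ-variables -/
def lw (d : D m) : ℕ := ∑ i ∈ Finset.univ.erase (0 : Fin (m+1)), d i

@[simp] lemma lw_add (d e : D m) : lw (d + e) = lw d + lw e := by
  simp [lw, Finset.sum_add_distrib]

@[simp] lemma lw_zero : lw (0 : D m) = 0 := by simp [lw]

@[simp] lemma lw_single0 (n : ℕ) : lw (single (0 : Fin (m+1)) n) = 0 := by
  apply Finset.sum_eq_zero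
  intro i hi
  rcases Finset.mem_erase.1 hi with ⟨h0, _⟩
  simp [single_apply, (Ne.symm h0)]

lemma lw_erase (d : D m) : lw (Finsupp.erase 0 d) = lw d := by
  apply Finset.sum_congr rfl
  intro i hi
  rcases Finset.mem_erase.1 hi with ⟨h0, _⟩
  simp [Finsupp.erase_ne h0]

@[simp] lemma erase0_single0 (n : ℕ) :
    Finsupp.erase (0 : Fin (m+1)) (single 0 n) = 0 := by
  ext i
  by_cases h : i = (0:Fin (m+1)) <;> simp [h, Finsupp.erase_ne, single_apply, Ne.symm]

lemma erase0_add (d e : D m) :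
    Finsupp.erase 0 (d + e) = Finsupp.erase 0 d + Finsupp.erase 0 e :=
  Finsupp.erase_add 0 d e

lemma self_eq_erase_add (d : D m) : d = Finsupp.erase 0 d + single 0 (d 0) := by
  rw [add_comm]; exact (Finsupp.single_add_erase 0 d).symm

lemma lw_eq_zero_iff (d : D m) : lw d = 0 ↔ d = single 0 (d 0) := by
  constructor
  · intro h
    ext i
    by_cases hi : i = 0
    · subst hi; simp
    · have : d i = 0 := by
        have := (Finset.sum_eq_zero_iff).1 h i (Finset.mem_erase.2 ⟨hi, Finset.mem_univ i⟩)
        exact this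
      simp [this, single_apply, Ne.symm hi]
  · intro h; rw [h]; simp

lemma eq_of_erase_eq {d e : D m} (h0 : d 0 = e 0)
    (h : Finsupp.erase 0 d = Finsupp.erase 0 e) : d = e := by
  ext i
  by_cases hi : i = 0
  · subst hi; exact h0
  · have := DFunLike.congr_fun h i
    simpa [Finsupp.erase_ne hi] using this

lemma le_single0 {d : D m} {n : ℕ} (h : d ≤ single 0 n) : d = single 0 (d 0) := by
  rw [← lw_eq_zero_iff]
  have := lw_single0 (m := m) n
  have hle : lw d ≤ lw (single (0 : Fin (m+1)) n) := by
    apply Finset.sum_le_sum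
    intro i _
    exact Finsupp.le_def.1 h i
  omega

lemma eq_of_le_of_lw_le {d e : D m} (h : d ≤ e) (h0 : d 0 = e 0) (hlw : lw e ≤ lw d) :
    d = e := by
  ext i
  by_cases hi : i = 0
  · subst hi; exact h0
  · by_contra hne
    have hlt : d i < e i := lt_of_le_of_ne (Finsupp.le_def.1 h i) hne
    have : lw d < lw e := by
      apply Finset.sum_lt_sum
      · intro j _; exact Finsupp.le_def.1 h j
      · exact ⟨i, Finset.mem_erase.2 ⟨hi, Finset.mem_univ i⟩, hlt⟩
    omega

open MvPowerSeries

lemma coeff_single_mul (f g : MvPowerSeries σ ℂ) (N : ℕ) :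
    MvPowerSeries.coeff (single 0 N) (f * g)
      = ∑ i ∈ Finset.range (N+1), MvPowerSeries.coeff (single 0 i) f * MvPowerSeries.coeff (single 0 (N - i)) g := by
  rw [coeff_mul, Finsupp.antidiagonal_single, Finset.sum_map]
  rw [← Finset.Nat.sum_antidiagonal_eq_sum_range_succ (fun i j => MvPowerSeries.coeff (single 0 i) f * MvPowerSeries.coeff (single 0 j) g)]
  rfl

/-- order in pure powers of x -/
def pOrd (q : ℕ) (f : MvPowerSeries σ ℂ) : Prop :=
  ∀ d : D m, lw d = 0 → d 0 < q → MvPowerSeries.coeff d f = 0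

lemma pOrd_single {q : ℕ} {f : MvPowerSeries σ ℂ} (h : pOrd q f) {n : ℕ} (hn : n < q) :
    MvPowerSeries.coeff (single 0 n) f = 0 :=
  h (single 0 n) (lw_single0 n) (by simpa using hn)

lemma pOrd_of_single {q : ℕ} {f : MvPowerSeries σ ℂ}
    (h : ∀ n < q, MvPowerSeries.coeff (single 0 n) f = 0) : pOrd q f := by
  intro d hlw hd
  rw [(lw_eq_zero_iff d).1 hlw]
  exact h _ hd

lemma pOrd_mono {q q' : ℕ} {f : MvPowerSeries σ ℂ} (h : pOrd q f) (hq : q' ≤ q) :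
    pOrd q' f := fun d h1 h2 => h d h1 (lt_of_lt_of_le h2 hq)

lemma pOrd_mul {p q : ℕ} {f g : MvPowerSeries σ ℂ} (hf : pOrd p f) (hg : pOrd q g) :
    pOrd (p + q) (f * g) := by
  apply pOrd_of_single
  intro n hn
  rw [coeff_single_mul]
  apply Finset.sum_eq_zero
  intro i hi
  rw [Finset.mem_range] at hi
  rcases lt_or_ge i p with h | h
  · rw [pOrd_single hf h, zero_mul]
  · rw [pOrd_single hg (by omega), mul_zero]

lemma pOrd_pow {p : ℕ} {f : MvPowerSeries σ ℂ} (hf : pOrd p f) (n : ℕ) :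
    pOrd (n * p) (f ^ n) := by
  induction n with
  | zero => intro d h1 h2; omega
  | succ n ih =>
      rw [pow_succ]
      have h2 := pOrd_mul ih hf
      have : (n+1) * p = n * p + p := by ring
      rw [this]
      exact h2

lemma pOrd_one : pOrd (m := m) 0 1 := fun d _ h => by omega

lemma coeff_single_mul_leading {p q : ℕ} {f g : MvPowerSeries σ ℂ}
    (hf : pOrd p f) (hg : pOrd q g) :
    MvPowerSeries.coeff (single 0 (p + q)) (f * g) = MvPowerSeries.coeff (single 0 p) f * MvPowerSeries.coeff (single 0 q) g := by
  rw [coeff_single_mul]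
  rw [Finset.sum_eq_single p]
  · have : p + q - p = q := by omega
    rw [this]
  · intro i hi hne
    rw [Finset.mem_range] at hi
    rcases lt_or_ge i p with h | h
    · rw [pOrd_single hf h, zero_mul]
    · have hip : p < i := lt_of_le_of_ne h (fun hh => hne hh.symm)
      rw [pOrd_single hg (by omega), mul_zero]
  · intro h; exact absurd (Finset.mem_range.2 (by omega)) h

lemma coeff_single_pow {f : MvPowerSeries σ ℂ} (hf : pOrd 1 f) (n : ℕ) :
    MvPowerSeries.coeff (single 0 n) (f ^ n) = (MvPowerSeries.coeff (single 0 1) f) ^ n := by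
  induction n with
  | zero =>
      simp
  | succ n ih =>
      have hfn : pOrd n (f ^ n) := by simpa using pOrd_pow hf n
      rw [pow_succ, pow_succ, coeff_single_mul_leading hfn hf, ih]

local notation "x1" => Finsupp.single (0 : Fin (m+1)) 1

-- basic coeff facts
lemma cf_apply (A : MvPowerSeries σ ℂ) (d : D m) : MvPowerSeries.coeff d A = A d := rfl

lemma coeff_formalDx (f : MvPowerSeries σ ℂ) (d : D m) :
    MvPowerSeries.coeff d (formalDx f) = ((d 0 : ℕ) + 1 : ℂ) * MvPowerSeries.coeff (d + x1) f := rfl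

lemma formalDx_add (f g : MvPowerSeries σ ℂ) :
    formalDx (f + g) = formalDx f + formalDx g := by
  ext d
  rw [map_add, coeff_formalDx, coeff_formalDx, coeff_formalDx, map_add]
  ring

lemma formalDx_monomial_zero {d : D m} (h : d 0 = 0) (c : ℂ) :
    formalDx (monomial d c) = 0 := by
  ext e
  rw [coeff_formalDx, coeff_monomial]
  rw [if_neg, mul_zero, map_zero]
  intro hh
  have := DFunLike.congr_fun hh (0 : Fin (m+1))
  simp [h] at this

lemma formalDx_monomial {d : D m} (h : d 0 ≠ 0) (c : ℂ) :
    formalDx (monomial d c) = monomial (d - x1) (((d 0 : ℕ) : ℂ) * c) := by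
  ext e
  rw [coeff_formalDx, coeff_monomial, cf_apply]
  rw [show (monomial (d - x1) (((d 0 : ℕ) : ℂ) * c)) e
      = MvPowerSeries.coeff e (monomial (d - x1) (((d 0 : ℕ) : ℂ) * c)) from rfl,
    coeff_monomial]
  by_cases he : e + x1 = d
  · rw [if_pos he, if_pos]
    · have h0 : e 0 + 1 = d 0 := by
        have := DFunLike.congr_fun he (0 : Fin (m+1))
        simpa using this
      rw [← h0]
      push_cast
      ring
    · ext i
      by_cases hi : i = (0 : Fin (m+1))
      · subst hi
        have := DFunLike.congr_fun he (0 : Fin (m+1))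
        simp only [Finsupp.add_apply, Finsupp.single_eq_same] at this
        simp [Finsupp.tsub_apply]
        omega
      · have := DFunLike.congr_fun he i
        simp only [Finsupp.add_apply, Finsupp.single_apply, if_neg (Ne.symm hi)] at this
        simp [Finsupp.tsub_apply, Finsupp.single_apply, Ne.symm hi]
        omega
  · rw [if_neg he, if_neg, mul_zero]
    intro hh
    apply he
    ext i
    have := DFunLike.congr_fun hh i
    simp only [Finsupp.tsub_apply] at this
    by_cases hi : i = (0 : Fin (m+1))
    · subst hi
      simp only [Finsupp.add_apply, Finsupp.single_eq_same]
      simp only [Finsupp.single_eq_same] at this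
      omega
    · simp only [Finsupp.add_apply, Finsupp.single_apply, if_neg (Ne.symm hi)] at this ⊢
      omega


/-! ### Slots and assignments -/

abbrev Slot (m : ℕ) := D m ⊕ ((ℕ × D m) ⊕ D m)

variable (k : ℕ)

def nu : Slot m → ℕ × ℕ
  | .inl d => (lw d, d 0 + k)
  | .inr (.inl (j, β)) => (lw β, j)
  | .inr (.inr β) => (lw β, 2*k+1)

noncomputable def lmon : Slot m → D m
  | .inl d => Finsupp.erase 0 d
  | .inr (.inl (_, β)) => β
  | .inr (.inr β) => β

def preset : Slot m → Prop
  | .inl d => d = 0 ∨ d = x1 ∨ d 0 = k+1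
  | .inr (.inl (j, β)) => β 0 ≠ 0 ∨ β = 0 ∨ k ≤ j
  | .inr (.inr β) => β 0 ≠ 0

noncomputable def presetVal (a : ℂ) : Slot m → ℂ := fun s => if s = Sum.inl x1 then a else 0

noncomputable def eqm : Slot m → D m
  | .inl d => d + single 0 k
  | .inr (.inl (j, β)) => β + single 0 j
  | .inr (.inr β) => β + single 0 (2*k+1)

@[simp] lemma nu_inl (d : D m) : nu k (Sum.inl d) = (lw d, d 0 + k) := rfl
@[simp] lemma nu_w (j : ℕ) (β : D m) : nu k (Sum.inr (Sum.inl (j, β))) = (lw β, j) := rfl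
@[simp] lemma nu_m (β : D m) : nu k (Sum.inr (Sum.inr β)) = (lw β, 2*k+1) := rfl
@[simp] lemma lmon_inl (d : D m) : lmon (Sum.inl d) = Finsupp.erase 0 d := rfl
@[simp] lemma lmon_w (j : ℕ) (β : D m) : lmon (Sum.inr (Sum.inl (j, β))) = β := rfl
@[simp] lemma lmon_m (β : D m) : lmon (Sum.inr (Sum.inr β)) = β := rfl
@[simp] lemma eqm_inl (d : D m) : eqm k (Sum.inl d) = d + single 0 k := rfl
@[simp] lemma eqm_w (j : ℕ) (β : D m) : eqm k (Sum.inr (Sum.inl (j, β))) = β + single 0 j := rfl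
@[simp] lemma eqm_m (β : D m) : eqm k (Sum.inr (Sum.inr β)) = β + single 0 (2*k+1) := rfl

def Bnd (p q : ℕ × ℕ) : Prop := p.1 < q.1 ∨ (p.1 = q.1 ∧ p.2 ≤ q.2)
def Blt (p q : ℕ × ℕ) : Prop := p.1 < q.1 ∨ (p.1 = q.1 ∧ p.2 < q.2)

lemma blt_wf : WellFounded (fun p q : ℕ × ℕ => Blt p q) := by
  have h := WellFounded.prod_lex (Nat.lt_wfRel.wf) (Nat.lt_wfRel.wf)
  apply Subrelation.wf (r := Prod.Lex Nat.lt Nat.lt) _ h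
  rintro ⟨pa, pb⟩ ⟨qa, qb⟩ hpq
  rcases hpq with h1 | ⟨h1, h2⟩
  · exact Prod.Lex.left _ _ h1
  · dsimp at h1; subst h1; exact Prod.Lex.right _ h2

/-! ### Series attached to an assignment of slot values -/

noncomputable def Phi (A : Slot m → ℂ) : MvPowerSeries σ ℂ := fun d => A (.inl d)
noncomputable def Yf (A : Slot m → ℂ) (j : ℕ) : MvPowerSeries σ ℂ :=
  fun d => if d 0 = 0 then A (.inr (.inl (j, d))) else 0
noncomputable def Msf (A : Slot m → ℂ) : MvPowerSeries σ ℂ :=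
  fun d => if d 0 = 0 then A (.inr (.inr d)) else 0

variable (Xh : MvPowerSeries (Fin (m+1)) ℂ)

noncomputable def Fser (A : Slot m → ℂ) : MvPowerSeries σ ℂ :=
  Phi A ^ (k+1) + (∑ j ∈ Finset.range k, Yf A j * Phi A ^ j)
    - formalDx (Phi A) * Xh * (1 + Msf A * Phi A ^ k)

lemma coeff_Phi (A : Slot m → ℂ) (d : D m) :
    MvPowerSeries.coeff d (Phi A) = A (.inl d) := rfl
lemma coeff_Yf (A : Slot m → ℂ) (j : ℕ) (d : D m) :
    MvPowerSeries.coeff d (Yf A j) = if d 0 = 0 then A (.inr (.inl (j, d))) else 0 := rfl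
lemma coeff_Msf (A : Slot m → ℂ) (d : D m) :
    MvPowerSeries.coeff d (Msf A) = if d 0 = 0 then A (.inr (.inr d)) else 0 := rfl

/-! ### The agreement calculus -/

def Agr (e0 : D m) (r : ℕ) (f g : MvPowerSeries σ ℂ) : Prop :=
  ∀ d : D m, Finsupp.erase 0 d ≤ Finsupp.erase 0 e0 →
    Bnd (lw d, d 0 + r) (lw e0, e0 0) →
    MvPowerSeries.coeff d f = MvPowerSeries.coeff d g

lemma agr_refl (e0 : D m) (r : ℕ) (f : MvPowerSeries σ ℂ) : Agr e0 r f f :=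
  fun _ _ _ => rfl

lemma agr_mono {e0 : D m} {r r' : ℕ} {f g : MvPowerSeries σ ℂ}
    (h : Agr e0 r f g) (hr : r ≤ r') : Agr e0 r' f g := by
  intro d h1 h2
  apply h d h1
  rcases h2 with h2 | ⟨h2, h3⟩
  · exact Or.inl h2
  · exact Or.inr ⟨h2, by omega⟩

lemma agr_add {e0 : D m} {r : ℕ} {f g f' g' : MvPowerSeries σ ℂ}
    (h : Agr e0 r f g) (h' : Agr e0 r f' g') : Agr e0 r (f + f') (g + g') := by
  intro d h1 h2
  rw [map_add, map_add, h d h1 h2, h' d h1 h2]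

lemma agr_sub {e0 : D m} {r : ℕ} {f g f' g' : MvPowerSeries σ ℂ}
    (h : Agr e0 r f g) (h' : Agr e0 r f' g') : Agr e0 r (f - f') (g - g') := by
  intro d h1 h2
  rw [map_sub, map_sub, h d h1 h2, h' d h1 h2]

lemma agr_sum {e0 : D m} {r : ℕ} {s : Finset ℕ} {f g : ℕ → MvPowerSeries σ ℂ}
    (h : ∀ j ∈ s, Agr e0 r (f j) (g j)) :
    Agr e0 r (∑ j ∈ s, f j) (∑ j ∈ s, g j) := by
  intro d h1 h2
  rw [map_sum, map_sum]
  exact Finset.sum_congr rfl fun j hj => h j hj d h1 h2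

lemma agr_mul {e0 : D m} {r1 r2 p1 p2 : ℕ} {f1 g1 f2 g2 : MvPowerSeries σ ℂ}
    (h1 : Agr e0 r1 f1 g1) (h2 : Agr e0 r2 f2 g2)
    (o1 : pOrd p1 f1) (o1' : pOrd p1 g1) (o2 : pOrd p2 f2) (o2' : pOrd p2 g2) :
    Agr e0 (max (r1 - p2) (r2 - p1)) (f1 * f2) (g1 * g2) := by
  intro d hle hbnd
  rw [coeff_mul, coeff_mul]
  apply Finset.sum_congr rfl
  intro p hp
  rw [Finset.HasAntidiagonal.mem_antidiagonal] at hp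
  have hlw : lw p.1 + lw p.2 = lw d := by rw [← hp, lw_add]
  have h00 : p.1 0 + p.2 0 = d 0 := by
    rw [← hp]; simp
  have her : Finsupp.erase 0 p.1 + Finsupp.erase 0 p.2 = Finsupp.erase 0 d := by
    rw [← hp, erase0_add]
  have hle1 : Finsupp.erase 0 p.1 ≤ Finsupp.erase 0 e0 :=
    le_trans (her ▸ self_le_add_right _ _) hle
  have hle2 : Finsupp.erase 0 p.2 ≤ Finsupp.erase 0 e0 :=
    le_trans (her ▸ self_le_add_left _ _) hle
  by_cases c1 : lw p.1 = 0 ∧ p.1 0 < p1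
  · rw [o1 p.1 c1.1 c1.2, o1' p.1 c1.1 c1.2, zero_mul, zero_mul]
  by_cases c2 : lw p.2 = 0 ∧ p.2 0 < p2
  · rw [o2 p.2 c2.1 c2.2, o2' p.2 c2.1 c2.2, mul_zero, mul_zero]
  push_neg at c1 c2
  have e1 : MvPowerSeries.coeff p.1 f1 = MvPowerSeries.coeff p.1 g1 := by
    apply h1 p.1 hle1
    rcases hbnd with hb | ⟨hb, hb2⟩
    · exact Or.inl (by omega)
    · rcases Nat.lt_or_ge (lw p.1) (lw d) with hh | hh
      · exact Or.inl (by omega)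
      · have hwp1 : lw p.1 = lw d := by omega
        have hwp2 : lw p.2 = 0 := by omega
        have hp2 : p2 ≤ p.2 0 := c2 hwp2
        refine Or.inr ⟨by omega, ?_⟩
        have hm : r1 - p2 ≤ max (r1 - p2) (r2 - p1) := le_max_left _ _
        omega
  have e2 : MvPowerSeries.coeff p.2 f2 = MvPowerSeries.coeff p.2 g2 := by
    apply h2 p.2 hle2
    rcases hbnd with hb | ⟨hb, hb2⟩
    · exact Or.inl (by omega)
    · rcases Nat.lt_or_ge (lw p.2) (lw d) with hh | hh
      · exact Or.inl (by omega)
      · have hwp2 : lw p.2 = lw d := by omega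
        have hwp1 : lw p.1 = 0 := by omega
        have hp1 : p1 ≤ p.1 0 := c1 hwp1
        refine Or.inr ⟨by omega, ?_⟩
        have hm : r2 - p1 ≤ max (r1 - p2) (r2 - p1) := le_max_right _ _
        omega
  rw [e1, e2]

lemma agr_pow {e0 : D m} {r : ℕ} {f g : MvPowerSeries σ ℂ}
    (h : Agr e0 r f g) (of : pOrd 1 f) (og : pOrd 1 g) :
    ∀ n, 1 ≤ n → Agr e0 (r + 1 - n) (f ^ n) (g ^ n) := by
  intro n hn
  induction n with
  | zero => omega
  | succ n ih =>
      rcases Nat.eq_or_lt_of_le hn with h1 | h1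
      · simp only [← h1]
        apply agr_mono _ (le_refl _)
        simpa [pow_one] using (by simpa using h : Agr e0 r (f^1) (g^1))
      · have hn1 : 1 ≤ n := by omega
        have ihn := ih hn1
        have hfn : pOrd n (f ^ n) := by simpa using pOrd_pow of n
        have hgn : pOrd n (g ^ n) := by simpa using pOrd_pow og n
        have := agr_mul ihn h hfn hgn of og
        rw [pow_succ, pow_succ]
        apply agr_mono this
        omega

lemma pOrd_zero (f : MvPowerSeries σ ℂ) : pOrd (m := m) 0 f :=
  fun _ _ h => absurd h (Nat.not_lt_zero _)

lemma eq_zero_of_lw0 {d : D m} (h : lw d = 0) (h0 : d 0 = 0) : d = 0 := by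
  have := (lw_eq_zero_iff d).1 h
  rw [this, h0, Finsupp.single_zero]

lemma erase0_of_zero {d : D m} (h : d 0 = 0) : Finsupp.erase 0 d = d := by
  ext i
  by_cases hi : i = (0 : Fin (m+1))
  · subst hi; simp [h]
  · simp [Finsupp.erase_ne hi]

lemma erase0_add_single (d : D m) (n : ℕ) :
    Finsupp.erase 0 (d + single 0 n) = Finsupp.erase 0 d := by
  rw [erase0_add, erase0_single0, add_zero]

section Locality

variable {k : ℕ} {Xh : MvPowerSeries (Fin (m+1)) ℂ} {A B : Slot m → ℂ}

lemma pOrd_Phi (hA0 : A (Sum.inl 0) = 0) : pOrd (m := m) 1 (Phi A) := by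
  intro d hlw hd
  have h0 : d 0 = 0 := by omega
  rw [eq_zero_of_lw0 hlw h0, coeff_Phi, hA0]

lemma pOrd_Yf (hAW : ∀ j, A (Sum.inr (Sum.inl (j, 0))) = 0) (q j : ℕ) :
    pOrd (m := m) q (Yf A j) := by
  intro d hlw _
  rw [coeff_Yf]
  by_cases h0 : d 0 = 0
  · rw [if_pos h0, eq_zero_of_lw0 hlw h0, hAW]
  · rw [if_neg h0]

lemma locality (hXo : pOrd (k+1) Xh)
    (hA0 : A (Sum.inl 0) = 0) (hB0 : B (Sum.inl 0) = 0)
    (hAW : ∀ j, A (Sum.inr (Sum.inl (j, 0))) = 0)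
    (hBW : ∀ j, B (Sum.inr (Sum.inl (j, 0))) = 0)
    (e0 : D m)
    (hagree : ∀ s : Slot m, lmon s ≤ Finsupp.erase 0 e0 →
      Bnd (nu k s) (lw e0, e0 0) → A s = B s) :
    MvPowerSeries.coeff e0 (Fser k Xh A) = MvPowerSeries.coeff e0 (Fser k Xh B) := by
  have oPhiA : pOrd 1 (Phi A) := pOrd_Phi hA0
  have oPhiB : pOrd 1 (Phi B) := pOrd_Phi hB0
  have oPhiPowA : ∀ n, pOrd n (Phi A ^ n) := fun n => by simpa using pOrd_pow oPhiA n
  have oPhiPowB : ∀ n, pOrd n (Phi B ^ n) := fun n => by simpa using pOrd_pow oPhiB n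
  have aPhi : Agr e0 k (Phi A) (Phi B) := by
    intro d h1 h2
    rw [coeff_Phi, coeff_Phi]
    exact hagree (Sum.inl d) h1 h2
  have aDX : Agr e0 (k+1) (formalDx (Phi A)) (formalDx (Phi B)) := by
    intro d h1 h2
    rw [coeff_formalDx, coeff_formalDx, coeff_Phi, coeff_Phi,
      hagree (Sum.inl (d + x1)) ?_ ?_]
    · rw [lmon_inl, erase0_add_single]; exact h1
    · rw [nu_inl]
      have e1 : lw (d + x1) = lw d := by simp
      have e2 : ((d + x1 : D m)) 0 = d 0 + 1 := by simp
      rw [e1, e2]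
      rcases h2 with hb | ⟨hb, hb2⟩
      · exact Or.inl hb
      · exact Or.inr ⟨hb, by omega⟩
  have aY : ∀ j, Agr e0 j (Yf A j) (Yf B j) := by
    intro j d h1 h2
    rw [coeff_Yf, coeff_Yf]
    by_cases h0 : d 0 = 0
    · rw [if_pos h0, if_pos h0, hagree (Sum.inr (Sum.inl (j, d))) ?_ ?_]
      · rw [lmon_w]
        rw [← erase0_of_zero h0]; exact h1
      · rw [nu_w]
        rcases h2 with hb | ⟨hb, hb2⟩
        · exact Or.inl hb
        · exact Or.inr ⟨hb, by omega⟩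
    · rw [if_neg h0, if_neg h0]
  have aMs : Agr e0 (2*k+1) (Msf A) (Msf B) := by
    intro d h1 h2
    rw [coeff_Msf, coeff_Msf]
    by_cases h0 : d 0 = 0
    · rw [if_pos h0, if_pos h0, hagree (Sum.inr (Sum.inr d)) ?_ ?_]
      · rw [lmon_m]
        rw [← erase0_of_zero h0]; exact h1
      · rw [nu_m]
        rcases h2 with hb | ⟨hb, hb2⟩
        · exact Or.inl hb
        · exact Or.inr ⟨hb, by omega⟩
    · rw [if_neg h0, if_neg h0]
  -- composites
  have tPhiPow : Agr e0 0 (Phi A ^ (k+1)) (Phi B ^ (k+1)) := by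
    have := agr_pow aPhi oPhiA oPhiB (k+1) (by omega)
    apply agr_mono this
    omega
  have tY : ∀ j ∈ Finset.range k, Agr e0 0 (Yf A j * Phi A ^ j) (Yf B j * Phi B ^ j) := by
    intro j hj
    rcases Nat.eq_zero_or_pos j with h | h
    · subst h
      have := agr_mul (aY 0) (agr_refl e0 0 (1 : MvPowerSeries σ ℂ))
        (pOrd_Yf hAW (k+2) 0) (pOrd_Yf hBW (k+2) 0) (pOrd_zero 1) (pOrd_zero 1)
      simp only [pow_zero]
      apply agr_mono this
      omega
    · have hphij : Agr e0 (k + 1 - j) (Phi A ^ j) (Phi B ^ j) := agr_pow aPhi oPhiA oPhiB j h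
      have := agr_mul (aY j) hphij
        (pOrd_Yf hAW (k+2) j) (pOrd_Yf hBW (k+2) j) (oPhiPowA j) (oPhiPowB j)
      apply agr_mono this
      have hjk := Finset.mem_range.1 hj
      omega
  have tDXX : Agr e0 0 (formalDx (Phi A) * Xh) (formalDx (Phi B) * Xh) := by
    have := agr_mul aDX (agr_refl e0 0 Xh) (pOrd_zero _) (pOrd_zero _) hXo hXo
    apply agr_mono this
    omega
  have tMsP : Agr e0 (k+1) (Msf A * Phi A ^ k) (Msf B * Phi B ^ k) := by
    rcases Nat.eq_zero_or_pos k with h | h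
    · subst h
      have := agr_mul aMs (agr_refl e0 0 (1 : MvPowerSeries σ ℂ))
        (pOrd_zero _) (pOrd_zero _) (pOrd_zero 1) (pOrd_zero 1)
      simp only [pow_zero]
      apply agr_mono this
      omega
    · have hphik : Agr e0 (k + 1 - k) (Phi A ^ k) (Phi B ^ k) := agr_pow aPhi oPhiA oPhiB k h
      have := agr_mul aMs hphik (pOrd_zero _) (pOrd_zero _) (oPhiPowA k) (oPhiPowB k)
      apply agr_mono this
      omega
  have tIn : Agr e0 (k+1) ((1 : MvPowerSeries σ ℂ) + Msf A * Phi A ^ k)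
      (1 + Msf B * Phi B ^ k) := agr_add (agr_refl _ _ _) tMsP
  have oDXX_A : pOrd (k+1) (formalDx (Phi A) * Xh) := by
    have := pOrd_mul (pOrd_zero (formalDx (Phi A))) hXo
    simpa using this
  have oDXX_B : pOrd (k+1) (formalDx (Phi B) * Xh) := by
    have := pOrd_mul (pOrd_zero (formalDx (Phi B))) hXo
    simpa using this
  have tBig : Agr e0 0 (formalDx (Phi A) * Xh * (1 + Msf A * Phi A ^ k))
      (formalDx (Phi B) * Xh * (1 + Msf B * Phi B ^ k)) := by
    have := agr_mul tDXX tIn oDXX_A oDXX_B (pOrd_zero _) (pOrd_zero _)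
    apply agr_mono this
    omega
  have total : Agr e0 0 (Fser k Xh A) (Fser k Xh B) :=
    agr_sub (agr_add tPhiPow (agr_sum tY)) tBig
  exact total e0 le_rfl (Or.inr ⟨rfl, by omega⟩)

end Locality

/-! ### helpers for slope computations -/

lemma pOrd_sum {p : ℕ} {s : Finset ℕ} {f : ℕ → MvPowerSeries σ ℂ}
    (h : ∀ j ∈ s, pOrd p (f j)) : pOrd (m := m) p (∑ j ∈ s, f j) := by
  intro d h1 h2
  rw [map_sum]
  exact Finset.sum_eq_zero fun j hj => h j hj d h1 h2

lemma kill_left {N : ℕ} {f g : MvPowerSeries σ ℂ} (hf : pOrd (N+1) f) :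
    MvPowerSeries.coeff (single 0 N) (f * g) = 0 := by
  rw [coeff_single_mul]
  apply Finset.sum_eq_zero
  intro i hi
  rw [Finset.mem_range] at hi
  rw [pOrd_single hf (by omega), zero_mul]

lemma pow_diff (f M : MvPowerSeries σ ℂ) (n : ℕ) :
    (f + M) ^ n = f ^ n + (∑ i ∈ Finset.range n, (f + M) ^ i * f ^ (n - 1 - i)) * M := by
  have h := geom_sum₂_mul (f + M) f n
  rw [add_sub_cancel_left] at h
  rw [h]
  ring

lemma sub_add_single {d : D m} (h : d 0 ≠ 0) (n : ℕ) :
    (d - x1) + single 0 (n+1) = d + single 0 n := by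
  ext i
  by_cases hi : i = (0 : Fin (m+1))
  · subst hi
    simp only [Finsupp.add_apply, Finsupp.tsub_apply, Finsupp.single_eq_same]
    omega
  · simp only [Finsupp.add_apply, Finsupp.tsub_apply, Finsupp.single_apply,
      if_neg (Ne.symm hi)]
    omega

section Updates

variable {L : Slot m → ℂ} {z : ℂ}

lemma Phi_update (L : Slot m → ℂ) (d : D m) (z : ℂ) :
    Phi (Function.update L (Sum.inl d) z)
      = Phi (Function.update L (Sum.inl d) 0) + monomial d z := by
  ext e
  rw [map_add, coeff_Phi, coeff_Phi, coeff_monomial]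
  by_cases he : e = d
  · subst he
    rw [Function.update_self, Function.update_self, if_pos rfl, zero_add]
  · rw [Function.update_of_ne (by simpa using he), Function.update_of_ne (by simpa using he),
      if_neg he, add_zero]

lemma Yf_update_self {j : ℕ} {β : D m} (hβ : β 0 = 0) (L : Slot m → ℂ) (z : ℂ) :
    Yf (Function.update L (Sum.inr (Sum.inl (j, β))) z) j
      = Yf (Function.update L (Sum.inr (Sum.inl (j, β))) 0) j + monomial β z := by
  ext e
  rw [map_add, coeff_Yf, coeff_Yf, coeff_monomial]
  by_cases he : e = β
  · subst he
    rw [if_pos hβ, if_pos hβ, Function.update_self, Function.update_self, if_pos rfl, zero_add]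
  · by_cases h0 : e 0 = 0
    · rw [if_pos h0, if_pos h0, Function.update_of_ne (by simpa using he),
        Function.update_of_ne (by simpa using he), if_neg he, add_zero]
    · rw [if_neg h0, if_neg h0, if_neg he, add_zero]

lemma Msf_update_self {β : D m} (hβ : β 0 = 0) (L : Slot m → ℂ) (z : ℂ) :
    Msf (Function.update L (Sum.inr (Sum.inr β)) z)
      = Msf (Function.update L (Sum.inr (Sum.inr β)) 0) + monomial β z := by
  ext e
  rw [map_add, coeff_Msf, coeff_Msf, coeff_monomial]
  by_cases he : e = β
  · subst he
    rw [if_pos hβ, if_pos hβ, Function.update_self, Function.update_self, if_pos rfl, zero_add]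
  · by_cases h0 : e 0 = 0
    · rw [if_pos h0, if_pos h0, Function.update_of_ne (by simpa using he),
        Function.update_of_ne (by simpa using he), if_neg he, add_zero]
    · rw [if_neg h0, if_neg h0, if_neg he, add_zero]

lemma Phi_update_ne {s : Slot m} (hs : ∀ d, s ≠ Sum.inl d) (L : Slot m → ℂ) (z : ℂ) :
    Phi (Function.update L s z) = Phi L := by
  ext e
  rw [coeff_Phi, coeff_Phi, Function.update_of_ne (fun h => hs e h.symm)]

lemma Yf_update_ne {s : Slot m} {j : ℕ} (hs : ∀ β, s ≠ Sum.inr (Sum.inl (j, β)))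
    (L : Slot m → ℂ) (z : ℂ) :
    Yf (Function.update L s z) j = Yf L j := by
  ext e
  rw [coeff_Yf, coeff_Yf]
  by_cases h0 : e 0 = 0
  · rw [if_pos h0, if_pos h0, Function.update_of_ne (fun h => hs e h.symm)]
  · rw [if_neg h0, if_neg h0]

lemma Msf_update_ne {s : Slot m} (hs : ∀ β, s ≠ Sum.inr (Sum.inr β))
    (L : Slot m → ℂ) (z : ℂ) :
    Msf (Function.update L s z) = Msf L := by
  ext e
  rw [coeff_Msf, coeff_Msf]
  by_cases h0 : e 0 = 0
  · rw [if_pos h0, if_pos h0, Function.update_of_ne (fun h => hs e h.symm)]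
  · rw [if_neg h0, if_neg h0]

end Updates

section Slopes

variable {k : ℕ} {Xh : MvPowerSeries (Fin (m+1)) ℂ}

/-- coefficient of the geometric-type sum -/
lemma coeff_geom_sum {f g : MvPowerSeries σ ℂ} {a : ℂ} (n : ℕ)
    (hof : pOrd 1 f) (hog : pOrd 1 g)
    (hfx : MvPowerSeries.coeff x1 f = a) (hgx : MvPowerSeries.coeff x1 g = a) :
    MvPowerSeries.coeff (single 0 n)
      (∑ i ∈ Finset.range (n+1), f ^ i * g ^ (n - i)) = ((n:ℂ)+1) * a ^ n := by
  rw [map_sum]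
  have : ∀ i ∈ Finset.range (n+1),
      MvPowerSeries.coeff (single 0 n) (f ^ i * g ^ (n - i)) = a ^ n := by
    intro i hi
    rw [Finset.mem_range] at hi
    have hin : i + (n - i) = n := by omega
    have h1 : pOrd i (f ^ i) := by simpa using pOrd_pow hof i
    have h2 : pOrd (n - i) (g ^ (n - i)) := by simpa using pOrd_pow hog (n - i)
    have key := coeff_single_mul_leading h1 h2
    rw [hin] at key
    rw [key, coeff_single_pow hof, coeff_single_pow hog, hfx, hgx, ← pow_add, hin]
  rw [Finset.sum_congr rfl this, Finset.sum_const, Finset.card_range, nsmul_eq_mul]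
  push_cast
  ring

lemma pOrd_geom {f g : MvPowerSeries σ ℂ} (n : ℕ) (hof : pOrd 1 f) (hog : pOrd 1 g) :
    pOrd (m := m) n (∑ i ∈ Finset.range (n+1), f ^ i * g ^ (n - i)) := by
  apply pOrd_sum
  intro i hi
  rw [Finset.mem_range] at hi
  have h1 : pOrd i (f ^ i) := by simpa using pOrd_pow hof i
  have h2 : pOrd (n - i) (g ^ (n - i)) := by simpa using pOrd_pow hog (n - i)
  have := pOrd_mul h1 h2
  apply pOrd_mono this
  omega

lemma slope_c (hk : 1 ≤ k) (hXo : pOrd (k+1) Xh) (L : Slot m → ℂ) (a z : ℂ)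
    (d : D m) (hd0 : d ≠ 0) (hdx : d ≠ x1)
    (hL0 : L (Sum.inl 0) = 0) (hLx : L (Sum.inl x1) = a)
    (hLW : ∀ j, L (Sum.inr (Sum.inl (j, 0))) = 0) :
    MvPowerSeries.coeff (d + single 0 k) (Fser k Xh (Function.update L (Sum.inl d) z))
      = MvPowerSeries.coeff (d + single 0 k) (Fser k Xh (Function.update L (Sum.inl d) 0))
        + z * (((k:ℂ)+1) * a^k
            - (d 0 : ℕ) * MvPowerSeries.coeff (single 0 (k+1)) Xh) := by
  have hinl0 : (Sum.inl (0 : D m) : Slot m) ≠ Sum.inl d := fun h => hd0 (Sum.inl.inj h).symm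
  have hinlx : (Sum.inl (x1 : D m) : Slot m) ≠ Sum.inl d := fun h => hdx (Sum.inl.inj h).symm
  set u0 := MvPowerSeries.coeff (single 0 (k+1)) Xh with hu0
  set e := d + single 0 k with he
  set B := Function.update L (Sum.inl d) 0 with hBdef
  set Φ := Phi B with hPhiB
  set M := monomial d z with hM
  have hB0 : B (Sum.inl 0) = 0 := by rw [hBdef, Function.update_of_ne hinl0, hL0]
  have hBx : B (Sum.inl x1) = a := by rw [hBdef, Function.update_of_ne hinlx, hLx]
  have hBW : ∀ j, B (Sum.inr (Sum.inl (j, 0))) = 0 := by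
    intro j
    rw [hBdef, Function.update_of_ne (by simp), hLW]
  have oΦ : pOrd 1 Φ := pOrd_Phi hB0
  have hΦx : MvPowerSeries.coeff x1 Φ = a := hBx
  have oM1 : ∀ d' : D m, lw d' = 0 → d' 0 < 1 → MvPowerSeries.coeff d' M = 0 := by
    intro d' h1 h2
    rw [hM, coeff_monomial, if_neg]
    intro hh
    exact hd0 (by rw [← hh, eq_zero_of_lw0 h1 (by omega)])
  have oΦz : pOrd 1 (Φ + M) := by
    intro d' h1 h2
    rw [map_add, oΦ d' h1 h2, oM1 d' h1 h2, add_zero]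
  have hΦzx : MvPowerSeries.coeff x1 (Φ + M) = a := by
    rw [map_add, hΦx, hM, coeff_monomial, if_neg (fun hh => hdx hh.symm), add_zero]
  have hup : Phi (Function.update L (Sum.inl d) z) = Φ + M := Phi_update L d z
  have hupY : ∀ j, Yf (Function.update L (Sum.inl d) z) j = Yf B j := by
    intro j
    rw [Yf_update_ne (by simp) L z, hBdef, Yf_update_ne (by simp) L 0]
  have hupM : Msf (Function.update L (Sum.inl d) z) = Msf B := by
    rw [Msf_update_ne (by simp) L z, hBdef, Msf_update_ne (by simp) L 0]
  -- the strip-off-M lemma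
  have strip : ∀ H : MvPowerSeries σ ℂ,
      MvPowerSeries.coeff e (H * M) = MvPowerSeries.coeff (single 0 k) H * z := by
    intro H
    rw [hM, he, add_comm d (single 0 k), coeff_add_mul_monomial]
  -- Term 1
  have T1 : MvPowerSeries.coeff e ((Φ + M)^(k+1))
      = MvPowerSeries.coeff e (Φ^(k+1)) + z * (((k:ℂ)+1) * a^k) := by
    rw [pow_diff Φ M (k+1), map_add, strip]
    simp only [Nat.add_sub_cancel]
    rw [coeff_geom_sum k oΦz oΦ hΦzx hΦx]
    ring
  -- Term 2
  have T2 : ∀ j, MvPowerSeries.coeff e (Yf B j * (Φ + M)^j)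
      = MvPowerSeries.coeff e (Yf B j * Φ^j) := by
    intro j
    rw [pow_diff Φ M j, mul_add, map_add, ← mul_assoc, strip,
      kill_left (pOrd_Yf hBW (k+1) j), zero_mul, add_zero]
  -- Term 3
  have hoG : pOrd (k - 1) (∑ i ∈ Finset.range k, (Φ + M) ^ i * Φ ^ (k - 1 - i)) := by
    have h := pOrd_geom (k-1) oΦz oΦ
    have hkk : k - 1 + 1 = k := by omega
    rw [hkk] at h
    exact h
  have T3 : MvPowerSeries.coeff e
        ((formalDx Φ + formalDx M) * Xh * (1 + Msf B * (Φ + M)^k))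
      = MvPowerSeries.coeff e (formalDx Φ * Xh * (1 + Msf B * Φ^k))
        + z * ((d 0 : ℕ) * u0) := by
    set G := ∑ i ∈ Finset.range k, (Φ + M) ^ i * Φ ^ (k - 1 - i) with hG
    have hpd : (Φ + M)^k = Φ^k + G * M := by
      have := pow_diff Φ M k
      rw [← hG] at this
      exact this
    have hsplit : (formalDx Φ + formalDx M) * Xh * (1 + Msf B * (Φ + M)^k)
        = formalDx Φ * Xh * (1 + Msf B * Φ^k)
          + (formalDx Φ * Xh * (Msf B * G)) * M
          + formalDx M * (Xh * (1 + Msf B * (Φ + M)^k)) := by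
      rw [hpd]
      ring
    rw [hsplit, map_add, map_add, strip]
    have hkill : MvPowerSeries.coeff (single 0 k) (formalDx Φ * Xh * (Msf B * G)) = 0 := by
      have o1 : pOrd (0 + (k+1) + (0 + (k-1))) (formalDx Φ * Xh * (Msf B * G)) :=
        pOrd_mul (pOrd_mul (pOrd_zero _) hXo) (pOrd_mul (pOrd_zero _) hoG)
      apply pOrd_single o1
      omega
    rw [hkill, zero_mul, add_zero]
    -- the DM part
    by_cases hd00 : d 0 = 0
    · rw [formalDx_monomial_zero hd00, MvPowerSeries.zero_mul, map_zero, hd00]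
      push_cast
      ring
    · rw [hM, formalDx_monomial hd00]
      have hE : e = (d - x1) + single 0 (k+1) := by rw [sub_add_single hd00, he]
      rw [hE, coeff_add_monomial_mul]
      have hcoefH : MvPowerSeries.coeff (single 0 (k+1))
          (Xh * (1 + Msf B * (Φ + M)^k)) = u0 := by
        have h0 : pOrd 0 ((1 : MvPowerSeries σ ℂ) + Msf B * (Φ + M)^k) := pOrd_zero _
        have := coeff_single_mul_leading hXo h0
        rw [add_zero] at this
        rw [this]
        have hc0 : MvPowerSeries.coeff (single 0 0)
            ((1 : MvPowerSeries σ ℂ) + Msf B * (Φ + M)^k) = 1 := by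
          rw [map_add]
          have hpk : pOrd k ((Φ + M)^k) := by simpa using pOrd_pow oΦz k
          have : pOrd (0 + k) (Msf B * (Φ + M)^k) := pOrd_mul (pOrd_zero _) hpk
          rw [pOrd_single this (by omega)]
          rw [Finsupp.single_zero, add_zero]
          simp
        rw [hc0, mul_one]
      rw [hcoefH]
      ring
  -- assembly
  have expandz : MvPowerSeries.coeff e (Fser k Xh (Function.update L (Sum.inl d) z))
      = MvPowerSeries.coeff e ((Φ + M)^(k+1))
        + (∑ j ∈ Finset.range k, MvPowerSeries.coeff e (Yf B j * (Φ + M)^j))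
        - MvPowerSeries.coeff e ((formalDx Φ + formalDx M) * Xh * (1 + Msf B * (Φ + M)^k)) := by
    rw [Fser, hup, hupM, map_sub, map_add, map_sum, formalDx_add]
    simp only [hupY]
  have expand0 : MvPowerSeries.coeff e (Fser k Xh (Function.update L (Sum.inl d) 0))
      = MvPowerSeries.coeff e (Φ^(k+1))
        + (∑ j ∈ Finset.range k, MvPowerSeries.coeff e (Yf B j * Φ^j))
        - MvPowerSeries.coeff e (formalDx Φ * Xh * (1 + Msf B * Φ^k)) := by
    rw [Fser, ← hBdef, ← hPhiB, map_sub, map_add, map_sum]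
  rw [expandz, expand0, T1, T3]
  rw [Finset.sum_congr rfl (fun j _ => T2 j)]
  ring

lemma slope_w (hXo : pOrd (k+1) Xh) (L : Slot m → ℂ) (a z : ℂ)
    (j : ℕ) (hj : j < k) (β : D m) (hβ : β 0 = 0)
    (hL0 : L (Sum.inl 0) = 0) (hLx : L (Sum.inl x1) = a) :
    MvPowerSeries.coeff (β + single 0 j)
        (Fser k Xh (Function.update L (Sum.inr (Sum.inl (j, β))) z))
      = MvPowerSeries.coeff (β + single 0 j)
          (Fser k Xh (Function.update L (Sum.inr (Sum.inl (j, β))) 0))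
        + z * a ^ j := by
  set s0 : Slot m := Sum.inr (Sum.inl (j, β)) with hs0
  set e := β + single 0 j with he
  have hPz : Phi (Function.update L s0 z) = Phi L := Phi_update_ne (by simp [hs0]) L z
  have hP0 : Phi (Function.update L s0 0) = Phi L := Phi_update_ne (by simp [hs0]) L 0
  have hMz : Msf (Function.update L s0 z) = Msf L := Msf_update_ne (by simp [hs0]) L z
  have hM0 : Msf (Function.update L s0 0) = Msf L := Msf_update_ne (by simp [hs0]) L 0
  have oΦ : pOrd 1 (Phi L) := pOrd_Phi hL0
  have hYne : ∀ i, i ≠ j → Yf (Function.update L s0 z) i = Yf L i := by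
    intro i hi
    apply Yf_update_ne _ L z
    intro β' hh
    rw [hs0] at hh
    exact hi (by injection (Sum.inr.inj hh) with h2; exact (Prod.mk.injEq _ _ _ _ ▸ h2).1.symm)
  have hYne0 : ∀ i, i ≠ j → Yf (Function.update L s0 0) i = Yf L i := by
    intro i hi
    apply Yf_update_ne _ L 0
    intro β' hh
    rw [hs0] at hh
    exact hi (by injection (Sum.inr.inj hh) with h2; exact (Prod.mk.injEq _ _ _ _ ▸ h2).1.symm)
  have hYj : Yf (Function.update L s0 z) j
      = Yf (Function.update L s0 0) j + monomial β z := Yf_update_self hβ L z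
  have key : ∀ i ∈ Finset.range k,
      MvPowerSeries.coeff e (Yf (Function.update L s0 z) i * Phi L ^ i)
        = MvPowerSeries.coeff e (Yf (Function.update L s0 0) i * Phi L ^ i)
          + (if i = j then z * a ^ j else 0) := by
    intro i _
    by_cases hi : i = j
    · subst hi
      have hΦx : MvPowerSeries.coeff x1 (Phi L) = a := hLx
      rw [if_pos rfl, hYj, add_mul, map_add, he, coeff_add_monomial_mul,
        coeff_single_pow oΦ, hΦx]
    · rw [if_neg hi, hYne i hi, hYne0 i hi, add_zero]
  have expandz : MvPowerSeries.coeff e (Fser k Xh (Function.update L s0 z))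
      = MvPowerSeries.coeff e (Phi L ^ (k+1))
        + (∑ i ∈ Finset.range k,
            MvPowerSeries.coeff e (Yf (Function.update L s0 z) i * Phi L ^ i))
        - MvPowerSeries.coeff e (formalDx (Phi L) * Xh * (1 + Msf L * Phi L ^ k)) := by
    rw [Fser, hPz, hMz, map_sub, map_add, map_sum]
  have expand0 : MvPowerSeries.coeff e (Fser k Xh (Function.update L s0 0))
      = MvPowerSeries.coeff e (Phi L ^ (k+1))
        + (∑ i ∈ Finset.range k,
            MvPowerSeries.coeff e (Yf (Function.update L s0 0) i * Phi L ^ i))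
        - MvPowerSeries.coeff e (formalDx (Phi L) * Xh * (1 + Msf L * Phi L ^ k)) := by
    rw [Fser, hP0, hM0, map_sub, map_add, map_sum]
  rw [expandz, expand0, Finset.sum_congr rfl key, Finset.sum_add_distrib,
    Finset.sum_ite_eq' (Finset.range k) j (fun _ => z * a ^ j), if_pos (Finset.mem_range.2 hj)]
  ring

lemma slope_m (hk : 1 ≤ k) (hXo : pOrd (k+1) Xh) (L : Slot m → ℂ) (a z : ℂ)
    (β : D m) (hβ : β 0 = 0)
    (hL0 : L (Sum.inl 0) = 0) (hLx : L (Sum.inl x1) = a) :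
    MvPowerSeries.coeff (β + single 0 (2*k+1))
        (Fser k Xh (Function.update L (Sum.inr (Sum.inr β)) z))
      = MvPowerSeries.coeff (β + single 0 (2*k+1))
          (Fser k Xh (Function.update L (Sum.inr (Sum.inr β)) 0))
        - z * (a * MvPowerSeries.coeff (single 0 (k+1)) Xh * a ^ k) := by
  set s0 : Slot m := Sum.inr (Sum.inr β) with hs0
  set e := β + single 0 (2*k+1) with he
  set u0 := MvPowerSeries.coeff (single 0 (k+1)) Xh with hu0
  have hPz : Phi (Function.update L s0 z) = Phi L := Phi_update_ne (by simp [hs0]) L z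
  have hP0 : Phi (Function.update L s0 0) = Phi L := Phi_update_ne (by simp [hs0]) L 0
  have hYe : ∀ i, Yf (Function.update L s0 z) i = Yf (Function.update L s0 0) i := by
    intro i
    rw [Yf_update_ne (by simp [hs0]) L z, Yf_update_ne (by simp [hs0]) L 0]
  have hMs : Msf (Function.update L s0 z)
      = Msf (Function.update L s0 0) + monomial β z := Msf_update_self hβ L z
  have oΦ : pOrd 1 (Phi L) := pOrd_Phi hL0
  have hΦx : MvPowerSeries.coeff x1 (Phi L) = a := hLx
  -- leading coefficient of DX * Xh * Φ^k at x^{2k+1}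
  have hDX0 : MvPowerSeries.coeff (single 0 0) (formalDx (Phi L)) = a := by
    rw [Finsupp.single_zero, coeff_formalDx]
    have : ((0 : D m) + x1) = x1 := by rw [zero_add]
    rw [this, hΦx]
    push_cast
    simp
  have hDXX : MvPowerSeries.coeff (single 0 (k+1)) (formalDx (Phi L) * Xh) = a * u0 := by
    have h := coeff_single_mul_leading (pOrd_zero (formalDx (Phi L))) hXo
    rw [zero_add] at h
    rw [h, hDX0]
  have hlead : MvPowerSeries.coeff (single 0 (2*k+1)) (formalDx (Phi L) * Xh * Phi L ^ k)
      = a * u0 * a ^ k := by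
    have o1 : pOrd (k+1) (formalDx (Phi L) * Xh) := by
      have := pOrd_mul (pOrd_zero (formalDx (Phi L))) hXo
      simpa using this
    have o2 : pOrd k (Phi L ^ k) := by simpa using pOrd_pow oΦ k
    have h := coeff_single_mul_leading o1 o2
    have hkk : k + 1 + k = 2*k+1 := by omega
    rw [hkk] at h
    rw [h, hDXX, coeff_single_pow oΦ, hΦx]
  have hsplit : formalDx (Phi L) * Xh * (1 + Msf (Function.update L s0 z) * Phi L ^ k)
      = formalDx (Phi L) * Xh * (1 + Msf (Function.update L s0 0) * Phi L ^ k)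
        + monomial β z * (formalDx (Phi L) * Xh * Phi L ^ k) := by
    rw [hMs]
    ring
  have expandz : MvPowerSeries.coeff e (Fser k Xh (Function.update L s0 z))
      = MvPowerSeries.coeff e (Fser k Xh (Function.update L s0 0))
        - MvPowerSeries.coeff e (monomial β z * (formalDx (Phi L) * Xh * Phi L ^ k)) := by
    rw [Fser, Fser, hPz, hP0, hsplit]
    simp only [hYe, map_add, map_sub]
    ring
  rw [expandz, he, coeff_add_monomial_mul, hlead]

end Slopes

section Solve

variable {k : ℕ} {Xh : MvPowerSeries (Fin (m+1)) ℂ}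

/-- the equations at pure-x monomials of degree `≤ k+1` hold automatically -/
lemma auto_eq (hk : 1 ≤ k) (hXo : pOrd (k+1) Xh) (C : Slot m → ℂ) (a : ℂ)
    (hC0 : C (Sum.inl 0) = 0) (hCx : C (Sum.inl x1) = a)
    (hCW : ∀ j, C (Sum.inr (Sum.inl (j, 0))) = 0)
    (haa : a^(k+1) = a * MvPowerSeries.coeff (single 0 (k+1)) Xh) :
    ∀ t ≤ k+1, MvPowerSeries.coeff (single 0 t) (Fser k Xh C) = 0 := by
  intro t ht
  have oΦ : pOrd 1 (Phi C) := pOrd_Phi hC0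
  have hΦx : MvPowerSeries.coeff x1 (Phi C) = a := hCx
  have oP1 : pOrd (k+1) (Phi C ^ (k+1)) := by simpa using pOrd_pow oΦ (k+1)
  have oDXX : pOrd (k+1) (formalDx (Phi C) * Xh) := by
    have := pOrd_mul (pOrd_zero (formalDx (Phi C))) hXo
    simpa using this
  have oT3 : pOrd (k+1) (formalDx (Phi C) * Xh * (1 + Msf C * Phi C ^ k)) := by
    have := pOrd_mul oDXX (pOrd_zero ((1 : MvPowerSeries σ ℂ) + Msf C * Phi C ^ k))
    simpa using this
  have hT2 : MvPowerSeries.coeff (single 0 t)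
      (∑ j ∈ Finset.range k, Yf C j * Phi C ^ j) = 0 := by
    rw [map_sum]
    exact Finset.sum_eq_zero fun j _ => kill_left (pOrd_Yf hCW (t+1) j)
  rw [Fser, map_sub, map_add, hT2, add_zero]
  rcases Nat.lt_or_ge t (k+1) with h | h
  · rw [pOrd_single oP1 h, pOrd_single oT3 h, sub_zero]
  · have ht1 : t = k+1 := by omega
    subst ht1
    rw [coeff_single_pow oΦ, hΦx]
    have hc0 : MvPowerSeries.coeff (single 0 0)
        ((1 : MvPowerSeries σ ℂ) + Msf C * Phi C ^ k) = 1 := by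
      rw [map_add]
      have hpk : pOrd k (Phi C ^ k) := by simpa using pOrd_pow oΦ k
      have hmul : pOrd (0 + k) (Msf C * Phi C ^ k) := pOrd_mul (pOrd_zero _) hpk
      rw [pOrd_single hmul (by omega), Finsupp.single_zero, add_zero]
      simp
    have hDXX : MvPowerSeries.coeff (single 0 (k+1)) (formalDx (Phi C) * Xh)
        = a * MvPowerSeries.coeff (single 0 (k+1)) Xh := by
      have h := coeff_single_mul_leading (pOrd_zero (formalDx (Phi C))) hXo
      rw [zero_add] at h
      rw [h]
      congr 1
      rw [Finsupp.single_zero, coeff_formalDx]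
      have hz : ((0 : D m) + x1) = x1 := zero_add _
      rw [hz, hΦx, Finsupp.zero_apply]
      push_cast
      ring
    have hT3 : MvPowerSeries.coeff (single 0 (k+1))
        (formalDx (Phi C) * Xh * (1 + Msf C * Phi C ^ k))
        = a * MvPowerSeries.coeff (single 0 (k+1)) Xh := by
      have h := coeff_single_mul_leading oDXX
        (pOrd_zero ((1 : MvPowerSeries σ ℂ) + Msf C * Phi C ^ k))
      rw [add_zero] at h
      rw [h, hc0, hDXX, mul_one]
    rw [hT3, haa, sub_self]

lemma exists_root_affine {S c : ℂ} (hS : S ≠ 0) : ∃ z : ℂ, c + z * S = 0 :=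
  ⟨-c / S, by field_simp; ring⟩

lemma solvable (hk : 1 ≤ k) (hXo : pOrd (k+1) Xh) (a : ℂ)
    (hak : a ^ k = MvPowerSeries.coeff (single 0 (k+1)) Xh)
    (hu0 : MvPowerSeries.coeff (single 0 (k+1)) Xh ≠ 0)
    (s : Slot m) (hs : ¬ preset k s) (L : Slot m → ℂ)
    (hL0 : L (Sum.inl 0) = 0) (hLx : L (Sum.inl x1) = a)
    (hLW : ∀ j, L (Sum.inr (Sum.inl (j, 0))) = 0) :
    ∃ z : ℂ, MvPowerSeries.coeff (eqm k s)
      (Fser k Xh (Function.update L s z)) = 0 := by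
  have ha : a ≠ 0 := by
    intro h
    rw [h, zero_pow (by omega)] at hak
    exact hu0 hak.symm
  set u0 := MvPowerSeries.coeff (single 0 (k+1)) Xh with hu0def
  match s with
  | Sum.inl d =>
      rw [preset] at hs
      push_neg at hs
      obtain ⟨h1, h2, h3⟩ := hs
      have hS : ((k:ℂ)+1) * a^k - (d 0 : ℕ) * u0 ≠ 0 := by
        rw [hak, ← sub_mul]
        apply mul_ne_zero _ hu0
        intro hh
        apply h3
        have : ((d 0 : ℕ) : ℂ) = ((k+1 : ℕ) : ℂ) := by push_cast; linear_combination -hh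
        exact_mod_cast Nat.cast_injective this
      obtain ⟨z, hz⟩ := exists_root_affine
        (c := MvPowerSeries.coeff (d + single 0 k)
          (Fser k Xh (Function.update L (Sum.inl d) 0))) hS
      exact ⟨z, by rw [eqm_inl, slope_c hk hXo L a z d h1 h2 hL0 hLx hLW, hz]⟩
  | Sum.inr (Sum.inl (j, β)) =>
      rw [preset] at hs
      push_neg at hs
      obtain ⟨h1, h2, h3⟩ := hs
      have hS : a ^ j ≠ 0 := pow_ne_zero _ ha
      obtain ⟨z, hz⟩ := exists_root_affine
        (c := MvPowerSeries.coeff (β + single 0 j)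
          (Fser k Xh (Function.update L (Sum.inr (Sum.inl (j, β))) 0))) hS
      refine ⟨z, ?_⟩
      rw [eqm_w, slope_w hXo L a z j (by omega) β (by omega) hL0 hLx, hz]
  | Sum.inr (Sum.inr β) =>
      rw [preset] at hs
      push_neg at hs
      have hS : -(a * u0 * a ^ k) ≠ 0 := by
        apply neg_ne_zero.2
        exact mul_ne_zero (mul_ne_zero ha hu0) (pow_ne_zero _ ha)
      obtain ⟨z, hz⟩ := exists_root_affine
        (c := MvPowerSeries.coeff (β + single 0 (2*k+1))
          (Fser k Xh (Function.update L (Sum.inr (Sum.inr β)) 0))) hS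
      refine ⟨z, ?_⟩
      rw [eqm_m, slope_m hk hXo L a z β (by omega) hL0 hLx]
      linear_combination hz

end Solve

section Construction

open scoped Classical

variable (k : ℕ) (Xh : MvPowerSeries (Fin (m+1)) ℂ) (a : ℂ)

/-- the (nonzero) linear coefficient of the equation attached to a slot -/
noncomputable def slopeOf : Slot m → ℂ
  | Sum.inl d => ((k:ℂ)+1) * a^k - (d 0 : ℕ) * MvPowerSeries.coeff (single 0 (k+1)) Xh
  | Sum.inr (Sum.inl (j, _)) => a ^ j
  | Sum.inr (Sum.inr _) => -(a * MvPowerSeries.coeff (single 0 (k+1)) Xh * a ^ k)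

noncomputable def zval (L : Slot m → ℂ) (s : Slot m) : ℂ :=
  - MvPowerSeries.coeff (eqm k s) (Fser k Xh (Function.update L s 0)) / slopeOf k Xh a s

lemma slopeOf_ne_zero (hk : 1 ≤ k)
    (hak : a ^ k = MvPowerSeries.coeff (single 0 (k+1)) Xh)
    (hu0 : MvPowerSeries.coeff (single 0 (k+1)) Xh ≠ 0)
    (s : Slot m) (hs : ¬ preset k s) : slopeOf k Xh a s ≠ 0 := by
  have ha : a ≠ 0 := by
    intro h
    rw [h, zero_pow (by omega)] at hak
    exact hu0 hak.symm
  match s with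
  | Sum.inl d =>
      rw [preset] at hs
      push_neg at hs
      obtain ⟨h1, h2, h3⟩ := hs
      rw [slopeOf, ← hak, ← sub_mul]
      apply mul_ne_zero _ (hak ▸ hu0)
      intro hh
      apply h3
      have : ((d 0 : ℕ) : ℂ) = ((k+1 : ℕ) : ℂ) := by push_cast; linear_combination -hh
      exact_mod_cast Nat.cast_injective this
  | Sum.inr (Sum.inl (j, β)) =>
      exact pow_ne_zero _ ha
  | Sum.inr (Sum.inr β) =>
      exact neg_ne_zero.2 (mul_ne_zero (mul_ne_zero ha hu0) (pow_ne_zero _ ha))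

lemma zval_spec (hk : 1 ≤ k) (hXo : pOrd (k+1) Xh)
    (hak : a ^ k = MvPowerSeries.coeff (single 0 (k+1)) Xh)
    (hu0 : MvPowerSeries.coeff (single 0 (k+1)) Xh ≠ 0)
    (s : Slot m) (hs : ¬ preset k s) (L : Slot m → ℂ)
    (hL0 : L (Sum.inl 0) = 0) (hLx : L (Sum.inl x1) = a)
    (hLW : ∀ j, L (Sum.inr (Sum.inl (j, 0))) = 0) :
    MvPowerSeries.coeff (eqm k s)
      (Fser k Xh (Function.update L s (zval k Xh a L s))) = 0 := by
  have hS := slopeOf_ne_zero k Xh a hk hak hu0 s hs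
  have key : ∀ z : ℂ, MvPowerSeries.coeff (eqm k s) (Fser k Xh (Function.update L s z))
      = MvPowerSeries.coeff (eqm k s) (Fser k Xh (Function.update L s 0))
        + z * slopeOf k Xh a s := by
    intro z
    match s with
    | Sum.inl d =>
        rw [preset] at hs
        push_neg at hs
        obtain ⟨h1, h2, _⟩ := hs
        rw [eqm_inl, slopeOf, slope_c hk hXo L a z d h1 h2 hL0 hLx hLW]
    | Sum.inr (Sum.inl (j, β)) =>
        rw [preset] at hs
        push_neg at hs
        obtain ⟨h1, _, h3⟩ := hs
        rw [eqm_w, slopeOf, slope_w hXo L a z j (by omega) β (by omega) hL0 hLx]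
    | Sum.inr (Sum.inr β) =>
        rw [preset] at hs
        push_neg at hs
        rw [eqm_m, slopeOf, slope_m hk hXo L a z β (by omega) hL0 hLx]
        ring
  rw [key, zval]
  field_simp; ring

/-- the order on slots -/
def srel : Slot m → Slot m → Prop := fun s s' => Blt (nu k s) (nu k s')

lemma srel_wf : WellFounded (srel (m := m) k) := InvImage.wf (nu k) blt_wf

lemma x1_ne_zero : (x1 : D m) ≠ 0 := by
  intro h
  have := DFunLike.congr_fun h (0 : Fin (m+1))
  simp at this

noncomputable def truncV (V : Slot m → ℂ) (s : Slot m) : Slot m → ℂ :=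
  fun s' => if preset k s' then presetVal a s' else if _h : srel k s' s then V s' else 0

lemma preset_inl0 : preset k (Sum.inl (0 : D m)) := Or.inl rfl
lemma preset_inlx : preset k (Sum.inl (x1 : D m)) := Or.inr (Or.inl rfl)
lemma preset_W0 (j : ℕ) : preset k (Sum.inr (Sum.inl (j, (0 : D m))) : Slot m) :=
  Or.inr (Or.inl rfl)

lemma presetVal_inl0 : presetVal a (Sum.inl (0 : D m)) = 0 := by
  rw [presetVal, if_neg]
  intro h
  exact x1_ne_zero (m := m) (Sum.inl.inj h).symm

lemma presetVal_inlx : presetVal a (Sum.inl (x1 : D m)) = a := by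
  rw [presetVal, if_pos rfl]

lemma presetVal_inr (w : (ℕ × D m) ⊕ D m) : presetVal a (Sum.inr w) = 0 := by
  rw [presetVal, if_neg]
  simp

lemma truncV_0 (V : Slot m → ℂ) (s : Slot m) : truncV k a V s (Sum.inl 0) = 0 := by
  rw [truncV]
  simp only [if_pos (preset_inl0 (m := m) k)]
  exact presetVal_inl0 a

lemma truncV_x (V : Slot m → ℂ) (s : Slot m) : truncV k a V s (Sum.inl x1) = a := by
  rw [truncV]
  simp only [if_pos (preset_inlx (m := m) k)]
  exact presetVal_inlx a

lemma truncV_W (V : Slot m → ℂ) (s : Slot m) (j : ℕ) :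
    truncV k a V s (Sum.inr (Sum.inl (j, 0))) = 0 := by
  rw [truncV]
  simp only [if_pos (preset_W0 (m := m) k j)]
  exact presetVal_inr a _

noncomputable def Vf : Slot m → ℂ :=
  (srel_wf (m := m) k).fix (fun s ih =>
    if preset k s then presetVal a s
    else zval k Xh a (truncV k a (fun s' => if h : srel k s' s then ih s' h else 0) s) s)

lemma truncV_idem (V : Slot m → ℂ) (s : Slot m) :
    truncV k a (fun s' => if _h : srel k s' s then V s' else 0) s = truncV k a V s := by
  funext s'
  by_cases h1 : preset k s'
  · simp [truncV, h1]
  · by_cases h2 : srel k s' s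
    · simp [truncV, h1, h2]
    · simp [truncV, h1, h2]

lemma Vf_eq (s : Slot m) :
    Vf k Xh a s = if preset k s then presetVal a s
      else zval k Xh a (truncV k a (Vf k Xh a) s) s := by
  have h := (srel_wf (m := m) k).fix_eq (fun s ih =>
    if preset k s then presetVal a s
    else zval k Xh a (truncV k a (fun s' => if h : srel k s' s then ih s' h else 0) s) s) s
  rw [Vf, h, truncV_idem]

lemma Vf_preset {s : Slot m} (hp : preset k s) : Vf k Xh a s = presetVal a s := by
  rw [Vf_eq, if_pos hp]

lemma Vf_solved (hk : 1 ≤ k) (hXo : pOrd (k+1) Xh)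
    (hak : a ^ k = MvPowerSeries.coeff (single 0 (k+1)) Xh)
    (hu0 : MvPowerSeries.coeff (single 0 (k+1)) Xh ≠ 0)
    {s : Slot m} (hs : ¬ preset k s) :
    MvPowerSeries.coeff (eqm k s)
      (Fser k Xh (Function.update (truncV k a (Vf k Xh a) s) s (Vf k Xh a s))) = 0 := by
  rw [Vf_eq, if_neg hs]
  exact zval_spec k Xh a hk hXo hak hu0 s hs _ (truncV_0 k a _ s) (truncV_x k a _ s)
    (truncV_W k a _ s)

lemma nu_eqm {s : Slot m} (hs : ¬ preset k s) :
    nu k s = (lw (eqm k s), eqm k s 0) := by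
  match s with
  | Sum.inl d =>
      rw [nu_inl, eqm_inl, lw_add, lw_single0, add_zero]
      simp
  | Sum.inr (Sum.inl (j, β)) =>
      rw [preset] at hs
      push_neg at hs
      rw [nu_w, eqm_w, lw_add, lw_single0, add_zero]
      have : (β + single 0 j : D m) 0 = j := by
        simp [hs.1]
      rw [this]
  | Sum.inr (Sum.inr β) =>
      rw [preset] at hs
      push_neg at hs
      rw [nu_m, eqm_m, lw_add, lw_single0, add_zero]
      have : (β + single 0 (2*k+1) : D m) 0 = 2*k+1 := by
        simp [hs]
      rw [this]

lemma lmon_eqm {s : Slot m} (hs : ¬ preset k s) :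
    Finsupp.erase 0 (eqm k s) = lmon s := by
  match s with
  | Sum.inl d => rw [eqm_inl, erase0_add_single, lmon_inl]
  | Sum.inr (Sum.inl (j, β)) =>
      rw [preset] at hs
      push_neg at hs
      rw [eqm_w, erase0_add_single, lmon_w, erase0_of_zero hs.1]
  | Sum.inr (Sum.inr β) =>
      rw [preset] at hs
      push_neg at hs
      rw [eqm_m, erase0_add_single, lmon_m, erase0_of_zero hs]

lemma lmon_lw (s : Slot m) : (nu k s).1 = lw (lmon s) := by
  match s with
  | Sum.inl d => rw [nu_inl, lmon_inl, lw_erase]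
  | Sum.inr (Sum.inl (j, β)) => rfl
  | Sum.inr (Sum.inr β) => rfl

lemma lmon_zero {s : Slot m} (hs : ¬ preset k s) : lmon s 0 = 0 := by
  match s with
  | Sum.inl d => rw [lmon_inl]; exact Finsupp.erase_same
  | Sum.inr (Sum.inl (j, β)) =>
      rw [preset] at hs; push_neg at hs; exact hs.1
  | Sum.inr (Sum.inr β) =>
      rw [preset] at hs; push_neg at hs; exact hs

lemma lmon_eq_of {s s' : Slot m} (hs : ¬ preset k s) (hs' : ¬ preset k s')
    (hn : (nu k s').1 = (nu k s).1) (hl : lmon s' ≤ lmon s) : lmon s' = lmon s := by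
  apply eq_of_le_of_lw_le hl
  · rw [lmon_zero k hs', lmon_zero k hs]
  · rw [← lmon_lw, ← lmon_lw, hn]

lemma collision {s s' : Slot m} (hs : ¬ preset k s) (hs' : ¬ preset k s')
    (hn : nu k s' = nu k s) (hl : lmon s' ≤ lmon s) : s' = s := by
  have hml : lmon s' = lmon s :=
    lmon_eq_of k hs hs' (by rw [hn]) hl
  have hn2 : (nu k s').2 = (nu k s).2 := by rw [hn]
  match s', s with
  | Sum.inl d', Sum.inl d =>
      simp only [nu_inl] at hn2
      simp only [lmon_inl] at hml
      have : d' = d := eq_of_erase_eq (by omega) hml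
      rw [this]
  | Sum.inl d', Sum.inr (Sum.inl (j, β)) =>
      exfalso
      rw [preset] at hs
      push_neg at hs
      simp only [nu_inl, nu_w] at hn2
      omega
  | Sum.inl d', Sum.inr (Sum.inr β) =>
      exfalso
      rw [preset] at hs'
      push_neg at hs'
      simp only [nu_inl, nu_m] at hn2
      exact hs'.2.2 (by omega)
  | Sum.inr (Sum.inl (j', β')), Sum.inl d =>
      exfalso
      rw [preset] at hs'
      push_neg at hs'
      simp only [nu_inl, nu_w] at hn2
      omega
  | Sum.inr (Sum.inl (j', β')), Sum.inr (Sum.inl (j, β)) =>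
      simp only [nu_w] at hn2
      simp only [lmon_w] at hml
      rw [hml, hn2]
  | Sum.inr (Sum.inl (j', β')), Sum.inr (Sum.inr β) =>
      exfalso
      rw [preset] at hs'
      push_neg at hs'
      simp only [nu_w, nu_m] at hn2
      omega
  | Sum.inr (Sum.inr β'), Sum.inl d =>
      exfalso
      rw [preset] at hs
      push_neg at hs
      simp only [nu_inl, nu_m] at hn2
      exact hs.2.2 (by omega)
  | Sum.inr (Sum.inr β'), Sum.inr (Sum.inl (j, β)) =>
      exfalso
      rw [preset] at hs
      push_neg at hs
      simp only [nu_w, nu_m] at hn2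
      omega
  | Sum.inr (Sum.inr β'), Sum.inr (Sum.inr β) =>
      simp only [lmon_m] at hml
      rw [hml]

lemma bnd_cases {p q : ℕ × ℕ} (h : Bnd p q) : Blt p q ∨ p = q := by
  rcases h with h | ⟨h1, h2⟩
  · exact Or.inl (Or.inl h)
  · rcases Nat.lt_or_ge p.2 q.2 with h3 | h3
    · exact Or.inl (Or.inr ⟨h1, h3⟩)
    · right
      have : p.2 = q.2 := by omega
      exact Prod.ext h1 this

lemma allzero (hk : 1 ≤ k) (hXo : pOrd (k+1) Xh)
    (hak : a ^ k = MvPowerSeries.coeff (single 0 (k+1)) Xh)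
    (hu0 : MvPowerSeries.coeff (single 0 (k+1)) Xh ≠ 0) :
    ∀ e : D m, MvPowerSeries.coeff e (Fser k Xh (Vf k Xh a)) = 0 := by
  intro e
  set V := Vf k Xh a with hV
  have hV0 : V (Sum.inl 0) = 0 := by
    rw [hV, Vf_preset k Xh a (preset_inl0 k), presetVal_inl0]
  have hVx : V (Sum.inl x1) = a := by
    rw [hV, Vf_preset k Xh a (preset_inlx k), presetVal_inlx]
  have hVW : ∀ j, V (Sum.inr (Sum.inl (j, 0))) = 0 := by
    intro j
    rw [hV, Vf_preset k Xh a (preset_W0 k j), presetVal_inr]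
  by_cases hauto : lw e = 0 ∧ e 0 ≤ k + 1
  · have he := (lw_eq_zero_iff e).1 hauto.1
    rw [he]
    exact auto_eq hk hXo V a hV0 hVx hVW
      (by rw [pow_succ, hak]; ring) (e 0) hauto.2
  · -- find the matching slot
    obtain ⟨s, hs, heq⟩ : ∃ s : Slot m, ¬ preset k s ∧ eqm k s = e := by
      by_cases h1 : e 0 < k
      · refine ⟨Sum.inr (Sum.inl (e 0, Finsupp.erase 0 e)), ?_, ?_⟩
        · intro hp
          rcases hp with hp | hp | hp
          · exact hp Finsupp.erase_same
          · have : lw e = 0 := by rw [← lw_erase, hp, lw_zero]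
            exact hauto ⟨this, by omega⟩
          · omega
        · rw [eqm_w, ← self_eq_erase_add]
      · by_cases h2 : e 0 = 2*k+1
        · refine ⟨Sum.inr (Sum.inr (Finsupp.erase 0 e)), ?_, ?_⟩
          · intro hp
            exact hp Finsupp.erase_same
          · rw [eqm_m, ← h2, ← self_eq_erase_add]
        · refine ⟨Sum.inl (Finsupp.erase 0 e + single 0 (e 0 - k)), ?_, ?_⟩
          · have hd0 : (Finsupp.erase 0 e + single 0 (e 0 - k) : D m) 0 = e 0 - k := by
              simp [Finsupp.erase_same]
            intro hp
            rcases hp with hp | hp | hp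
            · have h00 : (Finsupp.erase 0 e + single 0 (e 0 - k) : D m) 0 = 0 := by
                rw [hp]; rfl
              have hee : Finsupp.erase 0 e = 0 := by
                exact ((Finsupp.add_eq_zero_iff _ _).1 hp).1
              have : lw e = 0 := by rw [← lw_erase, hee, lw_zero]
              exact hauto ⟨this, by omega⟩
            · have h00 : (Finsupp.erase 0 e + single 0 (e 0 - k) : D m) 0 = 1 := by
                rw [hp]; simp
              rw [hd0] at h00
              have hee : Finsupp.erase 0 e = 0 := by
                have h3 := congrArg (Finsupp.erase (0 : Fin (m+1))) hp
                rw [erase0_add_single] at h3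
                rw [erase0_of_zero Finsupp.erase_same] at h3
                rw [h3, erase0_single0]
              have : lw e = 0 := by rw [← lw_erase, hee, lw_zero]
              exact hauto ⟨this, by omega⟩
            · rw [hd0] at hp
              omega
          · rw [eqm_inl, add_assoc, ← Finsupp.single_add]
            have h3 : e 0 - k + k = e 0 := by omega
            rw [h3, ← self_eq_erase_add]
    -- locality step
    set B := Function.update (truncV k a V s) s (V s) with hB
    have hsne : ∀ s' : Slot m, preset k s' → s' ≠ s := fun s' hp h => hs (h ▸ hp)
    have hB0 : B (Sum.inl 0) = 0 := by
      rw [hB, Function.update_of_ne (hsne _ (preset_inl0 k)), truncV_0]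
    have hBW : ∀ j, B (Sum.inr (Sum.inl (j, 0))) = 0 := by
      intro j
      rw [hB, Function.update_of_ne (hsne _ (preset_W0 k j)), truncV_W]
    have hagree : ∀ s' : Slot m, lmon s' ≤ Finsupp.erase 0 e →
        Bnd (nu k s') (lw e, e 0) → V s' = B s' := by
      intro s' hlm hbnd
      by_cases hps : preset k s'
      · rw [hB, Function.update_of_ne (hsne _ hps), truncV, if_pos hps, hV,
          Vf_preset k Xh a hps]
      · by_cases hss : s' = s
        · rw [hss, hB, Function.update_self]
        · have hblt : srel k s' s := by
            show Blt (nu k s') (nu k s)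
            have hb2 : Bnd (nu k s') (nu k s) := by
              rw [nu_eqm k hs, heq]
              exact hbnd
            rcases bnd_cases hb2 with h | h
            · exact h
            · exact absurd (collision k hs hps h
                (by rw [← lmon_eqm k hs, heq]; exact hlm)) hss
          rw [hB, Function.update_of_ne hss, truncV, if_neg hps, dif_pos hblt]
    have hloc := locality hXo hV0 hB0 hVW hBW e hagree
    rw [hloc, ← heq]
    exact Vf_solved k Xh a hk hXo hak hu0 hs
end Construction

end KostovAux

open KostovAux Finsupp in
theorem kostov_formal' (k : ℕ) (hk : 1 ≤ k) (m : ℕ)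
    (Xh : MvPowerSeries (Fin (m + 1)) ℂ)
    (u : PowerSeries ℂ) (hu : PowerSeries.constantCoeff u ≠ 0)
    (hX0 : ∀ n : ℕ, MvPowerSeries.coeff (Finsupp.single 0 n) Xh
      = if k + 1 ≤ n then PowerSeries.coeff (n - (k + 1)) u else 0) :
    ∃ (φh : MvPowerSeries (Fin (m + 1)) ℂ) (yh : Fin k → MvPowerSeries (Fin (m + 1)) ℂ)
      (μh : MvPowerSeries (Fin (m + 1)) ℂ),
      MvPowerSeries.constantCoeff φh = 0 ∧
      MvPowerSeries.coeff (Finsupp.single 0 1) φh ≠ 0 ∧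
      (∀ j, noXVar (yh j)) ∧ (∀ j, MvPowerSeries.constantCoeff (yh j) = 0) ∧
      noXVar μh ∧
      (φh ^ (k + 1) + ∑ j : Fin k, yh j * φh ^ (j : ℕ)) * (1 + μh * φh ^ k)⁻¹
        = formalDx φh * Xh := by
  have hu0 : MvPowerSeries.coeff (single 0 (k+1)) Xh = PowerSeries.constantCoeff u := by
    rw [hX0 (k+1), if_pos le_rfl, Nat.sub_self, PowerSeries.coeff_zero_eq_constantCoeff_apply]
  have hu0ne : MvPowerSeries.coeff (single 0 (k+1)) Xh ≠ 0 := by rw [hu0]; exact hu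
  have hXo : pOrd (k+1) Xh := by
    apply pOrd_of_single
    intro n hn
    rw [hX0 n, if_neg (by omega)]
  obtain ⟨a, hak⟩ : ∃ a : ℂ, a ^ k = MvPowerSeries.coeff (single 0 (k+1)) Xh :=
    IsAlgClosed.exists_pow_nat_eq _ (by omega)
  have ha : a ≠ 0 := by
    intro h
    rw [h, zero_pow (by omega)] at hak
    exact hu0ne hak.symm
  set V := Vf k Xh a with hV
  have hzero := allzero k Xh a hk hXo hak hu0ne
  have hV0 : V (Sum.inl 0) = 0 := by
    rw [hV, Vf_preset k Xh a (preset_inl0 k), presetVal_inl0]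
  have hVx : V (Sum.inl (single 0 1)) = a := by
    rw [hV, Vf_preset k Xh a (preset_inlx k), presetVal_inlx]
  have hVW : ∀ j, V (Sum.inr (Sum.inl (j, 0))) = 0 := by
    intro j
    rw [hV, Vf_preset k Xh a (preset_W0 k j), presetVal_inr]
  refine ⟨Phi V, fun j => Yf V (j : ℕ), Msf V, ?_, ?_, ?_, ?_, ?_, ?_⟩
  · rw [← MvPowerSeries.coeff_zero_eq_constantCoeff_apply, coeff_Phi, hV0]
  · rw [coeff_Phi, hVx]
    exact ha
  · intro j d hd
    rw [coeff_Yf, if_neg hd]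
  · intro j
    rw [← MvPowerSeries.coeff_zero_eq_constantCoeff_apply, coeff_Yf,
      if_pos (Finsupp.zero_apply), hVW]
  · intro d hd
    rw [coeff_Msf, if_neg hd]
  · -- the functional equation
    have hF : Fser k Xh V = 0 := MvPowerSeries.ext fun e => by rw [hzero e, map_zero]
    rw [Fser, sub_eq_zero] at hF
    have hsum : (∑ j : Fin k, Yf V (j : ℕ) * Phi V ^ (j : ℕ))
        = ∑ j ∈ Finset.range k, Yf V j * Phi V ^ j :=
      Fin.sum_univ_eq_sum_range (fun j => Yf V j * Phi V ^ j) k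
    rw [hsum, hF]
    have hW : MvPowerSeries.constantCoeff (1 + Msf V * Phi V ^ k) ≠ 0 := by
      rw [map_add, map_one, map_mul, map_pow,
        ← MvPowerSeries.coeff_zero_eq_constantCoeff_apply (Phi V), coeff_Phi, hV0,
        zero_pow (by omega), mul_zero, add_zero]
      exact one_ne_zero
    rw [mul_assoc, MvPowerSeries.mul_inv_cancel _ hW, mul_one]


/-- **Formal Kostov theorem.** -/
theorem kostov_formal (k : ℕ) (hk : 1 ≤ k) (m : ℕ)
    (Xh : MvPowerSeries (Fin (m + 1)) ℂ)
    (u : PowerSeries ℂ) (hu : PowerSeries.constantCoeff u ≠ 0)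
    (hX0 : ∀ n : ℕ, MvPowerSeries.coeff (Finsupp.single 0 n) Xh
      = if k + 1 ≤ n then PowerSeries.coeff (n - (k + 1)) u else 0) :
    ∃ (φh : MvPowerSeries (Fin (m + 1)) ℂ) (yh : Fin k → MvPowerSeries (Fin (m + 1)) ℂ)
      (μh : MvPowerSeries (Fin (m + 1)) ℂ),
      MvPowerSeries.constantCoeff φh = 0 ∧
      MvPowerSeries.coeff (Finsupp.single 0 1) φh ≠ 0 ∧
      (∀ j, noXVar (yh j)) ∧ (∀ j, MvPowerSeries.constantCoeff (yh j) = 0) ∧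
      noXVar μh ∧
      (φh ^ (k + 1) + ∑ j : Fin k, yh j * φh ^ (j : ℕ)) * (1 + μh * φh ^ k)⁻¹
        = formalDx φh * Xh := by
  exact kostov_formal' k hk m Xh u hu hX0
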